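/- For quadratics P(x) = (x−a)(x−a'), Q(x) = (x−b)(x−b'), R(x) = (x−c)(x−c') with real roots a < a' < b < b' < c < c', the Richelot polynomials U = [Q,R], V = [R,P], W = [P,Q], where [f,g] = f' g − g' f, each have two real roots. -/

import Mathlib

private lemma deriv_root_quad (r s x : ℝ) :
    deriv (fun x : ℝ => (x - r) * (x - s)) x = (x - s) + (x - r) := by
  have h := (((hasDerivAt_id x).sub_const r).mul ((hasDerivAt_id x).sub_const s))
  simp only [id] at h
  rw [(show HasDerivAt (fun x : ℝ => (x - r) * (x - s)) (1 * (x - s) + (x - r) * 1) x from h).deriv]; ring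

private lemma richelot_aux (p p' q q' : ℝ) (h1 : p < p') (h2 : p' < q) (h3 : q < q')
    (f : ℝ → ℝ)
    (hf : ∀ x, f x = (2*x - p - p') * ((x - q) * (x - q'))
        - (2*x - q - q') * ((x - p) * (x - p'))) :
    ∃ u u' : ℝ, u ≠ u' ∧ f u = 0 ∧ f u' = 0 := by
  have hfe : f = fun x => (2*x - p - p') * ((x - q) * (x - q'))
        - (2*x - q - q') * ((x - p) * (x - p')) := funext hf
  have hc : Continuous f := by rw [hfe]; continuity
  have hfp : f p < 0 := by
    rw [hf]
    nlinarith [mul_neg_of_neg_of_pos (sub_neg.mpr h1)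
      (mul_pos_of_neg_of_neg (sub_neg.mpr (h1.trans h2)) (sub_neg.mpr ((h1.trans h2).trans h3)))]
  have hfp' : 0 < f p' := by
    rw [hf]
    nlinarith [mul_pos (sub_pos.mpr (h2.trans h3)) (sub_pos.mpr h2), sub_pos.mpr h1]
  have hfq : 0 < f q := by
    rw [hf]
    nlinarith [mul_pos (sub_pos.mpr (h1.trans h2)) (sub_pos.mpr h2), sub_neg.mpr h3]
  have hfq' : f q' < 0 := by
    rw [hf]
    nlinarith [mul_pos (sub_pos.mpr (h1.trans (h2.trans h3)))
      (sub_pos.mpr (h2.trans h3)), sub_pos.mpr h3]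
  obtain ⟨u, hu, hu0⟩ := intermediate_value_Ioo h1.le hc.continuousOn ⟨hfp, hfp'⟩
  obtain ⟨u', hu', hu'0⟩ := intermediate_value_Ioo' h3.le hc.continuousOn ⟨hfq', hfq⟩
  exact ⟨u, u', by nlinarith [hu.2, hu'.1], hu0, hu'0⟩

/-- The Richelot polynomials `U = [Q,R]`, `V = [R,P]`, `W = [P,Q]` for
quadratics with strictly ordered real roots each have two distinct real roots. -/
theorem richelot_real_roots (a a' b b' c c' : ℝ)
    (h1 : a < a') (h2 : a' < b) (h3 : b < b') (h4 : b' < c) (h5 : c < c')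
    (P Q R U V W : ℝ → ℝ)
    (hP : ∀ x, P x = (x - a) * (x - a'))
    (hQ : ∀ x, Q x = (x - b) * (x - b'))
    (hR : ∀ x, R x = (x - c) * (x - c'))
    (hU : ∀ x, U x = deriv Q x * R x - deriv R x * Q x)
    (hV : ∀ x, V x = deriv R x * P x - deriv P x * R x)
    (hW : ∀ x, W x = deriv P x * Q x - deriv Q x * P x) :
    (∃ u u' : ℝ, u ≠ u' ∧ U u = 0 ∧ U u' = 0) ∧
    (∃ v v' : ℝ, v ≠ v' ∧ V v = 0 ∧ V v' = 0) ∧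
    (∃ w w' : ℝ, w ≠ w' ∧ W w = 0 ∧ W w' = 0) := by
  have hPe : P = fun x => (x - a) * (x - a') := funext hP
  have hQe : Q = fun x => (x - b) * (x - b') := funext hQ
  have hRe : R = fun x => (x - c) * (x - c') := funext hR
  have hP' : ∀ x, deriv P x = 2*x - a - a' := by
    intro x; rw [hPe, deriv_root_quad]; ring
  have hQ' : ∀ x, deriv Q x = 2*x - b - b' := by
    intro x; rw [hQe, deriv_root_quad]; ring
  have hR' : ∀ x, deriv R x = 2*x - c - c' := by
    intro x; rw [hRe, deriv_root_quad]; ring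
  refine ⟨?_, ?_, ?_⟩
  · exact richelot_aux b b' c c' h3 h4 h5 U (fun x => by
      rw [hU, hQ', hR', hQ, hR])
  · obtain ⟨v, v', hvv, hv, hv'⟩ := richelot_aux a a' c c' h1 (h2.trans (h3.trans h4)) h5
      (fun x => -(V x)) (fun x => by
        show -(V x) = _; rw [hV, hR', hP', hP, hR]; ring)
    exact ⟨v, v', hvv, neg_eq_zero.mp hv, neg_eq_zero.mp hv'⟩
  · exact richelot_aux a a' b b' h1 h2 h3 W (fun x => by
      rw [hW, hP', hQ', hP, hQ])
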